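/- A 2-step memory scheme separates the hypotheses (non-adaptive adversary): With W and W̄(·|·,0), W̄(·|·,1) as in the erasure example and the transmitter input pair distributed as P_{X_1X_2}(0,0) = P_{X_1X_2}(1,1) = 1/2, let Q_{Y_1Y_2}(y_1,y_2) := Σ_{x} (1/2) W(y_1|x) W(y_2|x) be the double-letter output distribution under H0. Then for p ∈ (0,1), r ∈ (0,1), there is NO joint state distribution P_{S̄_1S̄_2} on {0,1}² such that the induced double-letter output distribution under H1, Q̄_{Y_1Y_2}(y_1,y_2) := Σ_{x,s̄_1,s̄_2} (1/2)·[x ∈ {(0,0),(1,1) inputs}]·P_{S̄_1S̄_2}(s̄_1,s̄_2) W̄(y_1|x,s̄_1) W̄(y_2|x,s̄_2), equals Q_{Y_1Y_2}. Specifically, matching the Y_1-marginal forces P_{S̄_1} to be uniform, and then Q_{Y_1Y_2}(0,1) = 0 while Q̄_{Y_1Y_2}(0,1) > 0. -/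

import Mathlib

open Finset

/-- `p` is a probability mass function. -/
def IsDist {Z : Type*} [Fintype Z] (p : Z → ℝ) : Prop :=
  (∀ z, 0 ≤ p z) ∧ ∑ z, p z = 1

/-- The output alphabet `{0, 1, e}` of the erasure example. -/
inductive Out : Type
  | o0 | o1 | oe
deriving DecidableEq

instance : Fintype Out where
  elems := {Out.o0, Out.o1, Out.oe}
  complete := by intro x; cases x <;> simp

/-- The binary erasure channel `BEC(p)`: `W(x|x) = 1-p`, `W(e|x) = p`
(inputs `false = 0`, `true = 1`). -/
noncomputable def Wbec (p : ℝ) : Bool → Out → ℝ :=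
  fun x y =>
    match x, y with
    | false, Out.o0 => 1 - p
    | false, Out.o1 => 0
    | false, Out.oe => p
    | true,  Out.o0 => 0
    | true,  Out.o1 => 1 - p
    | true,  Out.oe => p

/-- The state-dependent channel `W̄(·|·,s̄)` of the erasure example (states
`false = 0`, `true = 1`): `W̄(·|·,0)` transmits input `1` cleanly (up to erasure) and
flips input `0` to `1` with probability `(1-p)r`; `W̄(·|·,1)` is symmetric. -/
noncomputable def WbarEx (p r : ℝ) : Bool → Bool → Out → ℝ :=
  fun x s y =>
    match x, s, y with
    | false, false, Out.o0 => (1 - p) * (1 - r)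
    | false, false, Out.o1 => (1 - p) * r
    | false, false, Out.oe => p
    | true,  false, Out.o0 => 0
    | true,  false, Out.o1 => 1 - p
    | true,  false, Out.oe => p
    | false, true,  Out.o0 => 1 - p
    | false, true,  Out.o1 => 0
    | false, true,  Out.oe => p
    | true,  true,  Out.o0 => (1 - p) * r
    | true,  true,  Out.o1 => (1 - p) * (1 - r)
    | true,  true,  Out.oe => p

/-- The double-letter output distribution under `H0` when the transmitter sends the pair
`(X₁,X₂)` with `P(0,0) = P(1,1) = 1/2`. -/
noncomputable def Q2 (p : ℝ) (y : Out × Out) : ℝ :=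
  ∑ x : Bool, (1/2 : ℝ) * Wbec p x y.1 * Wbec p x y.2

/-- The double-letter output distribution under `H1` when the (non-adaptive) adversary
chooses the state pair `(S̄₁,S̄₂)` according to `P`, independently of the inputs. -/
noncomputable def Qbar2 (p r : ℝ) (P : Bool × Bool → ℝ) (y : Out × Out) : ℝ :=
  ∑ x : Bool, (1/2 : ℝ) *
    ∑ s : Bool × Bool, P s * WbarEx p r x s.1 y.1 * WbarEx p r x s.2 y.2

lemma sum_out (f : Out → ℝ) : ∑ y, f y = f Out.o0 + f Out.o1 + f Out.oe := by
  rw [show (Finset.univ : Finset Out) = {Out.o0, Out.o1, Out.oe} by decide]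
  simp [Finset.sum_insert]; ring

lemma sum_bb (f : Bool × Bool → ℝ) :
    ∑ s, f s = f (false,false) + f (false,true) + f (true,false) + f (true,true) := by
  simp [Fintype.sum_prod_type, Fintype.sum_bool]; ring

lemma part3 (p r : ℝ) (hp : p ∈ Set.Ioo (0:ℝ) 1) (hr : r ∈ Set.Ioo (0:ℝ) 1)
    (P : Bool × Bool → ℝ) (hP : IsDist P)
    (h : ∀ y1 : Out, (∑ y2, Qbar2 p r P (y1, y2)) = ∑ y2, Q2 p (y1, y2)) :
    (∑ s2, P (false, s2)) = 1/2 ∧ 0 < Qbar2 p r P (Out.o0, Out.o1) := by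
  obtain ⟨hnn, hsum⟩ := hP
  rw [sum_bb] at hsum
  have h1p : (0:ℝ) < 1 - p := by linarith [hp.2]
  have h1r : (0:ℝ) < 1 - r := by linarith [hr.2]
  have E := h Out.o0
  simp only [Qbar2, Q2, sum_out, sum_bb, Fintype.sum_bool, Wbec, WbarEx] at E
  have ht : P (false, false) + P (false, true) = 1/2 := by
    have h1 : (1 - p) * r * (1 - 2 * (P (false,false) + P (false,true))) = 0 := by
      linear_combination 2 * E - (1-p)*(1+r)*hsum
    have h2 : 1 - 2 * (P (false,false) + P (false,true)) = 0 := by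
      rcases mul_eq_zero.mp h1 with h' | h'
      · rcases mul_eq_zero.mp h' with h'' | h''
        · linarith
        · linarith [hr.1]
      · exact h'
    linarith
  constructor
  · rw [Fintype.sum_bool]; linarith
  · have hq : Qbar2 p r P (Out.o0, Out.o1) =
        (1/2) * (1-p)^2 * r * (P (false,false) * (1-r) + 2 * P (true,false)
          + P (true,true) * (1-r)) := by
      simp only [Qbar2, sum_bb, Fintype.sum_bool, WbarEx]
      ring
    rw [hq]
    have hB : (1-r)/2 ≤ P (false,false) * (1-r) + 2 * P (true,false)
        + P (true,true) * (1-r) := by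
      nlinarith [mul_nonneg h1r.le (show (0:ℝ) ≤ P (false,false) + P (true,false)
          + P (true,true) - 1/2 by linarith [hnn (false,false)]),
        mul_nonneg hr.1.le (hnn (true,false)), hnn (true,false)]
    have : (0:ℝ) < (1/2) * (1-p)^2 * r :=
      mul_pos (mul_pos (by norm_num) (pow_pos h1p 2)) hr.1
    nlinarith [hr.1]

/-- A 2-step memory scheme separates the hypotheses (non-adaptive adversary): no joint
state distribution `P_{S̄₁S̄₂}` makes the double-letter output distribution under `H1`
equal to the one under `H0`; specifically, matching the `Y₁`-marginal forces `P_{S̄₁}` to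
be uniform, and then `Q(0,1) = 0` while `Q̄(0,1) > 0`. -/
theorem two_step_memory_separates
    (p r : ℝ) (hp : p ∈ Set.Ioo (0:ℝ) 1) (hr : r ∈ Set.Ioo (0:ℝ) 1) :
    (∀ P : Bool × Bool → ℝ, IsDist P → Qbar2 p r P ≠ Q2 p) ∧
    Q2 p (Out.o0, Out.o1) = 0 ∧
    (∀ P : Bool × Bool → ℝ, IsDist P →
      (∀ y1 : Out, (∑ y2, Qbar2 p r P (y1, y2)) = ∑ y2, Q2 p (y1, y2)) →
        (∑ s2, P (false, s2)) = 1/2 ∧ 0 < Qbar2 p r P (Out.o0, Out.o1)) := by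
  have hQ0 : Q2 p (Out.o0, Out.o1) = 0 := by
    simp only [Q2, Fintype.sum_bool, Wbec]; ring
  refine ⟨?_, hQ0, fun P hP h => part3 p r hp hr P hP h⟩
  intro P hP heq
  have h : ∀ y1 : Out, (∑ y2, Qbar2 p r P (y1, y2)) = ∑ y2, Q2 p (y1, y2) := by
    intro y1
    exact Finset.sum_congr rfl fun y2 _ => by rw [heq]
  have := (part3 p r hp hr P hP h).2
  rw [heq, hQ0] at this
  exact lt_irrefl 0 this
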